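/- Let θ ≥ 2 be an integer and β > 0. Every x ∈ Δ_θ that maximizes φ_β over Δ_θ satisfies: (i) x_i > 0 for all 1 ≤ i ≤ θ; (ii) there exists a ∈ ℝ such that β·x_i = (1 − a) + log x_i for every 1 ≤ i ≤ θ; and consequently (iii) the coordinates x_1, …, x_θ take at most two distinct values. -/

import Mathlib

/-- The set `Δ_θ` of decreasing probability vectors in `ℝ^θ`. -/
def simplexOrd (θ : ℕ) : Set (Fin θ → ℝ) :=
  {x | (∀ i j : Fin θ, i ≤ j → x j ≤ x i) ∧ (∀ i, 0 ≤ x i) ∧ ∑ i, x i = 1}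

/-- The function `φ_β` (with `0·log 0 = 0`, automatic since `Real.log 0 = 0`). -/
noncomputable def phiFE (θ : ℕ) (β : ℝ) (x : Fin θ → ℝ) : ℝ :=
  β / 2 * ((∑ i, (x i) ^ 2) - 1) - ∑ i, x i * Real.log (x i)

/-- Single-coordinate summand of `φ_β`. -/
noncomputable def Faux (β t : ℝ) : ℝ := β / 2 * t ^ 2 - t * Real.log t

lemma phi_eq (θ : ℕ) (β : ℝ) (x : Fin θ → ℝ) :
    phiFE θ β x = (∑ i, Faux β (x i)) - β / 2 := by
  unfold phiFE Faux
  rw [Finset.sum_sub_distrib, ← Finset.mul_sum]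
  ring

lemma sum_two_update {θ : ℕ} (F : ℝ → ℝ) (x : Fin θ → ℝ) {i j : Fin θ} (hij : i ≠ j)
    (a b : ℝ) :
    ∑ k, F (Function.update (Function.update x i a) j b k)
      = (∑ k, F (x k)) + ((F a - F (x i)) + (F b - F (x j))) := by
  classical
  set y := Function.update (Function.update x i a) j b with hy
  have hyi : y i = a := by simp [hy, Function.update_of_ne hij]
  have hyj : y j = b := by simp [hy]
  have hyk : ∀ k, k ≠ i → k ≠ j → y k = x k := by
    intro k h1 h2
    simp [hy, Function.update_of_ne h1, Function.update_of_ne h2]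
  have hdiff : ∑ k, (F (y k) - F (x k)) = ∑ k ∈ ({i, j} : Finset (Fin θ)), (F (y k) - F (x k)) := by
    refine (Finset.sum_subset (Finset.subset_univ _) ?_).symm
    intro k _ hk
    simp only [Finset.mem_insert, Finset.mem_singleton, not_or] at hk
    rw [hyk k hk.1 hk.2, sub_self]
  have hpair : ∑ k ∈ ({i, j} : Finset (Fin θ)), (F (y k) - F (x k))
      = (F a - F (x i)) + (F b - F (x j)) := by
    rw [Finset.sum_pair hij, hyi, hyj]
  have hsub := Finset.sum_sub_distrib (s := (Finset.univ : Finset (Fin θ)))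
    (f := fun k => F (y k)) (g := fun k => F (x k))
  linarith [hdiff, hpair, hsub]

lemma key_pos {β t0 ε : ℝ} (hβ : 0 < β) (ht0 : 0 < t0) (hε : 0 < ε) (hεt : ε < t0)
    (hlog : Real.log ε < Real.log t0 - β * t0) :
    Faux β t0 < Faux β (t0 - ε) + Faux β ε := by
  unfold Faux
  have h1 : Real.log (t0 - ε) ≤ Real.log t0 := Real.log_le_log (by linarith) (by linarith)
  have h2 : 0 ≤ (t0 - ε) * (Real.log t0 - Real.log (t0 - ε)) :=
    mul_nonneg (by linarith) (by linarith)
  have h3 : ε * (β * t0) < ε * (Real.log t0 - Real.log ε) := by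
    apply mul_lt_mul_of_pos_left _ hε; linarith
  nlinarith [mul_pos hβ (mul_pos hε hε), h2, h3]

lemma hasDerivAt_Faux (β : ℝ) {t : ℝ} (ht : t ≠ 0) :
    HasDerivAt (Faux β) (β * t - (Real.log t + 1)) t := by
  have h1 : HasDerivAt (fun s : ℝ => s ^ 2) (2 * t) t := by simpa using hasDerivAt_pow 2 t
  have h2 := Real.hasDerivAt_mul_log ht
  have h3 := (h1.const_mul (β / 2)).sub h2
  rw [show β * t - (Real.log t + 1) = β / 2 * (2 * t) - (Real.log t + 1) by ring]
  exact h3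

lemma three_aux {β c : ℝ} {s t u : ℝ} (hs : 0 < s) (hst : s < t) (htu : t < u)
    (h1 : β * s - Real.log s = c) (h2 : β * t - Real.log t = c)
    (h3 : β * u - Real.log u = c) : False := by
  have ht : 0 < t := hs.trans hst
  have hu : 0 < u := ht.trans htu
  have hus : 0 < u - s := by linarith
  set lam := (u - t) / (u - s) with hlamdef
  set mu := (t - s) / (u - s) with hmudef
  have hlam : 0 < lam := div_pos (by linarith) hus
  have hmu : 0 < mu := div_pos (by linarith) hus
  have hsum : lam + mu = 1 := by rw [hlamdef, hmudef]; field_simp; ring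
  have hcomb : lam * s + mu * u = t := by
    rw [hlamdef, hmudef]; field_simp; ring
  have hcc := strictConcaveOn_log_Ioi.2 (Set.mem_Ioi.2 hs) (Set.mem_Ioi.2 hu)
    (ne_of_lt (hst.trans htu)) hlam hmu hsum
  rw [smul_eq_mul, smul_eq_mul, smul_eq_mul, smul_eq_mul, hcomb] at hcc
  have ls : Real.log s = β * s - c := by linarith
  have lt' : Real.log t = β * t - c := by linarith
  have lu : Real.log u = β * u - c := by linarith
  rw [ls, lt', lu] at hcc
  have e1 : β * (lam * s + mu * u) = β * t := by rw [hcomb]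
  have e2 : c * (lam + mu) = c * 1 := by rw [hsum]
  nlinarith [e1, e2]

/-- every maximizer `x` of `φ_β` over `Δ_θ` has strictly positive coordinates,
satisfies the Lagrange condition `β·x_i = (1 − a) + log x_i` for some `a ∈ ℝ`, and its
coordinates take at most two distinct values. -/
theorem stmt19 (θ : ℕ) (hθ : 2 ≤ θ) (β : ℝ) (hβ : 0 < β)
    (x : Fin θ → ℝ) (hx : x ∈ simplexOrd θ)
    (hmax : ∀ y ∈ simplexOrd θ, phiFE θ β y ≤ phiFE θ β x) :
    (∀ i, 0 < x i) ∧
    (∃ a : ℝ, ∀ i, β * x i = (1 - a) + Real.log (x i)) ∧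
    (Finset.univ.image x).card ≤ 2 := by
  classical
  obtain ⟨hord, hnn, hsum⟩ := hx
  -- maximality over the full (unordered) simplex, by symmetry of φ
  have hmax' : ∀ y : Fin θ → ℝ, (∀ i, 0 ≤ y i) → ∑ i, y i = 1 →
      phiFE θ β y ≤ phiFE θ β x := by
    intro y hy hysum
    set σ := Tuple.sort (fun i => -(y i)) with hσ
    have hmono := Tuple.monotone_sort (fun i => -(y i))
    have hmem : (fun i => y (σ i)) ∈ simplexOrd θ := by
      refine ⟨fun i j hij => ?_, fun i => hy _, ?_⟩
      · have := hmono hij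
        simpa using this
      · exact (Equiv.sum_comp σ y).trans hysum
    have hle := hmax _ hmem
    have e1 : ∑ i, (y (σ i)) ^ 2 = ∑ i, (y i) ^ 2 := Equiv.sum_comp σ (fun i => (y i) ^ 2)
    have e2 : ∑ i, y (σ i) * Real.log (y (σ i)) = ∑ i, y i * Real.log (y i) :=
      Equiv.sum_comp σ (fun i => y i * Real.log (y i))
    have : phiFE θ β (fun i => y (σ i)) = phiFE θ β y := by
      unfold phiFE
      rw [e1, e2]
    linarith [hle, this]
  have hθ0 : 0 < θ := by omega
  set i0 : Fin θ := ⟨0, hθ0⟩ with hi0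
  have hmaxc : ∀ k, x k ≤ x i0 := by
    intro k
    exact hord i0 k (by simp [hi0, Fin.le_def])
  have hx0pos : 0 < x i0 := by
    rcases (hnn i0).lt_or_eq with h | h
    · exact h
    · exfalso
      have hall : ∀ k : Fin θ, k ∈ Finset.univ → x k = 0 := fun k _ =>
        le_antisymm (by linarith [hmaxc k]) (hnn k)
      rw [Finset.sum_congr rfl hall] at hsum
      simp at hsum
  -- Part (i): positivity
  have hpos : ∀ i, 0 < x i := by
    intro k
    rcases (hnn k).lt_or_eq with h | h
    · exact h
    exfalso
    have hxk : x k = 0 := h.symm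
    have hki : i0 ≠ k := by
      intro e; rw [← e] at hxk; linarith
    set t0 := x i0 with ht0
    set ε := t0 * Real.exp (-(β * t0)) / 2 with hεdef
    have hexp1 : Real.exp (-(β * t0)) < 1 :=
      Real.exp_lt_one_iff.2 (by nlinarith)
    have hexp0 : 0 < Real.exp (-(β * t0)) := Real.exp_pos _
    have hεpos : 0 < ε := by rw [hεdef]; positivity
    have hεlt : ε < t0 := by rw [hεdef]; nlinarith
    have hlog : Real.log ε < Real.log t0 - β * t0 := by
      rw [hεdef, Real.log_div (by positivity) (by norm_num),
        Real.log_mul (ne_of_gt hx0pos) (Real.exp_ne_zero _), Real.log_exp]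
      have := Real.log_pos (by norm_num : (1:ℝ) < 2)
      linarith
    set y := Function.update (Function.update x i0 (t0 - ε)) k ε with hy
    have hynn : ∀ i, 0 ≤ y i := by
      intro i
      rcases eq_or_ne i k with rfl | h1
      · rw [hy]; simp; linarith
      rcases eq_or_ne i i0 with rfl | h2
      · rw [hy]
        rw [Function.update_of_ne h1, Function.update_self]
        linarith
      · rw [hy, Function.update_of_ne h1, Function.update_of_ne h2]
        exact hnn i
    have hysum : ∑ i, y i = 1 := by
      have := sum_two_update (fun t => t) x hki (t0 - ε) ε
      rw [hy, this, hxk, hsum]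
      ring
    have hφ : phiFE θ β x < phiFE θ β y := by
      rw [phi_eq, phi_eq, hy, sum_two_update (Faux β) x hki (t0 - ε) ε]
      have hF0 : Faux β 0 = 0 := by simp [Faux]
      have hk2 := key_pos hβ hx0pos hεpos hεlt hlog
      rw [hxk, hF0]
      linarith
    exact absurd (hmax' y hynn hysum) (not_le.2 hφ)
  -- Part (ii): Lagrange condition
  have hlag : ∀ i j : Fin θ, β * x i - Real.log (x i) = β * x j - Real.log (x j) := by
    intro i j
    rcases eq_or_ne i j with rfl | hij
    · rfl
    set D : ℝ → ℝ := fun ε => Faux β (x i + ε) + Faux β (x j - ε) with hD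
    have hδ : 0 < min (x i) (x j) := lt_min (hpos i) (hpos j)
    have hloc : IsLocalMax D 0 := by
      filter_upwards [Metric.ball_mem_nhds (0:ℝ) hδ] with ε hε
      rw [Metric.mem_ball, Real.dist_eq, sub_zero] at hε
      have habs := abs_lt.1 hε
      have hε1 : -(x i) < ε := by
        have := habs.1; have h' := min_le_left (x i) (x j); linarith
      have hε2 : ε < x j := lt_of_lt_of_le habs.2 (min_le_right _ _)
      set y := Function.update (Function.update x i (x i + ε)) j (x j - ε) with hy
      have hynn : ∀ l, 0 ≤ y l := by
        intro l
        rcases eq_or_ne l j with rfl | h1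
        · rw [hy, Function.update_self]; linarith
        rcases eq_or_ne l i with rfl | h2
        · rw [hy, Function.update_of_ne h1, Function.update_self]; linarith
        · rw [hy, Function.update_of_ne h1, Function.update_of_ne h2]; exact hnn l
      have hysum : ∑ l, y l = 1 := by
        have := sum_two_update (fun t => t) x hij (x i + ε) (x j - ε)
        rw [hy, this, hsum]
        ring
      have hle := hmax' y hynn hysum
      rw [phi_eq, phi_eq, hy, sum_two_update (Faux β) x hij (x i + ε) (x j - ε)] at hle
      simp only [hD, add_zero, sub_zero]
      linarith
    have haff1 : HasDerivAt (fun ε : ℝ => x i + ε) 1 0 := by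
      simpa using (hasDerivAt_id (0:ℝ)).const_add (x i)
    have haff2 : HasDerivAt (fun ε : ℝ => x j - ε) (-1) 0 := by
      simpa using HasDerivAt.const_sub (x j) (hasDerivAt_id (0:ℝ))
    have hFi : HasDerivAt (Faux β) (β * x i - (Real.log (x i) + 1)) ((fun ε : ℝ => x i + ε) 0) := by
      simpa using hasDerivAt_Faux β (ne_of_gt (hpos i))
    have hFj : HasDerivAt (Faux β) (β * x j - (Real.log (x j) + 1)) ((fun ε : ℝ => x j - ε) 0) := by
      simpa using hasDerivAt_Faux β (ne_of_gt (hpos j))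
    have hc1 : HasDerivAt (fun ε : ℝ => Faux β (x i + ε))
        ((β * x i - (Real.log (x i) + 1)) * 1) 0 := HasDerivAt.comp 0 hFi haff1
    have hc2 : HasDerivAt (fun ε : ℝ => Faux β (x j - ε))
        ((β * x j - (Real.log (x j) + 1)) * (-1)) 0 := HasDerivAt.comp 0 hFj haff2
    have hder : HasDerivAt D
        ((β * x i - (Real.log (x i) + 1)) * 1 + (β * x j - (Real.log (x j) + 1)) * (-1)) 0 :=
      hc1.add hc2
    have hzero := hloc.hasDerivAt_eq_zero hder
    linarith [hzero]
  refine ⟨hpos, ⟨1 - (β * x i0 - Real.log (x i0)), fun i => by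
    have := hlag i i0; linarith⟩, ?_⟩
  -- Part (iii): at most two values
  by_contra hc
  push_neg at hc
  obtain ⟨p, q, r, hp, hq, hr, hpq, hpr, hqr⟩ := Finset.two_lt_card_iff.1 hc
  have key : ∀ v, v ∈ Finset.univ.image x →
      0 < v ∧ β * v - Real.log v = β * x i0 - Real.log (x i0) := by
    intro v hv
    obtain ⟨i, _, rfl⟩ := Finset.mem_image.1 hv
    exact ⟨hpos i, hlag i i0⟩
  obtain ⟨hp0, hpc⟩ := key p hp
  obtain ⟨hq0, hqc⟩ := key q hq
  obtain ⟨hr0, hrc⟩ := key r hr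
  rcases lt_trichotomy p q with h1 | h1 | h1
  · rcases lt_trichotomy q r with h2 | h2 | h2
    · exact three_aux hp0 h1 h2 hpc hqc hrc
    · exact hqr h2
    · rcases lt_trichotomy p r with h3 | h3 | h3
      · exact three_aux hp0 h3 h2 hpc hrc hqc
      · exact hpr h3
      · exact three_aux hr0 h3 h1 hrc hpc hqc
  · exact hpq h1
  · rcases lt_trichotomy p r with h2 | h2 | h2
    · exact three_aux hq0 h1 h2 hqc hpc hrc
    · exact hpr h2
    · rcases lt_trichotomy q r with h3 | h3 | h3
      · exact three_aux hq0 h3 h2 hqc hrc hpc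
      · exact hqr h3
      · exact three_aux hr0 h3 h1 hrc hqc hpc
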